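/- Assume a = a(ρ) ∈ (0, 1] and that the deviation angle satisfies |α_c| < π(1/a − 2). Let f₀ be a positive Borel measure on I of total mass ρ > 0 and assume that for every θ ∈ I the characteristic t ↦ γ_t(θ) is a C¹ solution taking values in I. Then for every θ ∈ I, |γ_t(θ) − α_d| → 0 as t → +∞. -/

import Mathlib

open MeasureTheory Real Filter
open scoped Real

/-- The angular collision-probability profile `𝒢(s) = (1/π)·min{s, 2π−s}`. -/
noncomputable def Gfun (s : ℝ) : ℝ := (1 / π) * min s (2 * π - s)

lemma Gfun_nonneg {s : ℝ} (h0 : 0 ≤ s) (h2 : s ≤ 2 * π) : 0 ≤ Gfun s := by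
  have h : (0:ℝ) ≤ min s (2 * π - s) := le_min h0 (by linarith)
  have hπ := Real.pi_pos
  exact mul_nonneg (by positivity) h

lemma Gfun_le_one {s : ℝ} (h0 : 0 ≤ s) (h2 : s ≤ 2 * π) : Gfun s ≤ 1 := by
  have hπ := Real.pi_pos
  have h : min s (2 * π - s) ≤ π := by
    rcases le_total s π with h | h
    · exact (min_le_left _ _).trans h
    · exact (min_le_right _ _).trans (by linarith)
  calc (1 / π) * min s (2 * π - s) ≤ (1 / π) * π := by
        exact mul_le_mul_of_nonneg_left h (by positivity)
    _ = 1 := by field_simp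

lemma Gfun_le {s : ℝ} (h0 : 0 ≤ s) : Gfun s ≤ s / π := by
  have hπ := Real.pi_pos
  calc (1 / π) * min s (2 * π - s) ≤ (1 / π) * s :=
        mul_le_mul_of_nonneg_left (min_le_left _ _) (by positivity)
    _ = s / π := by ring

lemma Gfun_lip (s t : ℝ) : |Gfun s - Gfun t| ≤ |s - t| / π := by
  have hπ := Real.pi_pos
  have h : |min s (2 * π - s) - min t (2 * π - t)| ≤ |s - t| := by
    refine (abs_min_sub_min_le_max s (2 * π - s) t (2 * π - t)).trans ?_
    have : |2 * π - s - (2 * π - t)| = |s - t| := by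
      rw [show 2 * π - s - (2 * π - t) = -(s - t) by ring, abs_neg]
    rw [this]; simp
  calc |Gfun s - Gfun t| = (1 / π) * |min s (2 * π - s) - min t (2 * π - t)| := by
        rw [Gfun, Gfun, ← mul_sub, abs_mul, abs_of_pos (by positivity : (0:ℝ) < 1 / π)]
    _ ≤ (1 / π) * |s - t| := mul_le_mul_of_nonneg_left h (by positivity)
    _ = |s - t| / π := by ring

lemma decay_bound {ρ C : ℝ} (hρ : 0 < ρ) (hC : 0 ≤ C) {v F : ℝ → ℝ} {T t : ℝ} (hT : T ≤ t)
    (hd : ∀ s ∈ Set.Icc T t, HasDerivAt v (-ρ * v s + F s) s)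
    (hF : ∀ s ∈ Set.Icc T t, |F s| ≤ C) :
    |v t| ≤ |v T| * Real.exp (-(ρ * (t - T))) + C / ρ := by
  set f : ℝ → ℝ := fun s => Real.exp (ρ * s) * v s with hfdef
  have hfd : ∀ s ∈ Set.Icc T t, HasDerivAt f (Real.exp (ρ * s) * F s) s := by
    intro s hs
    have h1 : HasDerivAt (fun u => Real.exp (ρ * u)) (ρ * Real.exp (ρ * s)) s := by
      simpa [mul_comm, Function.comp_def] using (Real.hasDerivAt_exp (ρ * s)).comp s ((hasDerivAt_id s).const_mul ρ)
    have h2 := h1.mul (hd s hs)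
    have heq : ρ * Real.exp (ρ * s) * v s + Real.exp (ρ * s) * (-ρ * v s + F s)
        = Real.exp (ρ * s) * F s := by ring
    rwa [heq] at h2
  have hcont : ContinuousOn f (Set.Icc T t) := fun s hs =>
    ((hfd s hs).continuousAt).continuousWithinAt
  have hBd : ∀ x : ℝ, HasDerivAt
      (fun s => Real.exp (ρ * T) * |v T| + C / ρ * (Real.exp (ρ * s) - Real.exp (ρ * T)))
      (C * Real.exp (ρ * x)) x := by
    intro x
    have h1 : HasDerivAt (fun u => Real.exp (ρ * u)) (ρ * Real.exp (ρ * x)) x := by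
      simpa [mul_comm, Function.comp_def] using (Real.hasDerivAt_exp (ρ * x)).comp x ((hasDerivAt_id x).const_mul ρ)
    have h2 := ((h1.sub_const (Real.exp (ρ * T))).const_mul (C / ρ)).const_add
      (Real.exp (ρ * T) * |v T|)
    have heq : C / ρ * (ρ * Real.exp (ρ * x)) = C * Real.exp (ρ * x) := by
      field_simp
    rwa [heq] at h2
  have key := image_norm_le_of_norm_deriv_right_le_deriv_boundary hcont
    (fun x hx => (hfd x (Set.mem_Icc.2 ⟨hx.1, hx.2.le⟩)).hasDerivWithinAt)
    (by simp [hfdef, abs_mul, Real.abs_exp] : ‖f T‖ ≤ _) hBd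
    (fun x hx => by
      have hFx := hF x (Set.mem_Icc.2 ⟨hx.1, hx.2.le⟩)
      have : ‖Real.exp (ρ * x) * F x‖ = Real.exp (ρ * x) * |F x| := by
        rw [Real.norm_eq_abs, abs_mul, Real.abs_exp]
      rw [this, mul_comm C]
      exact mul_le_mul_of_nonneg_left hFx (Real.exp_pos _).le)
    (Set.mem_Icc.2 ⟨hT, le_refl t⟩)
  have hft : ‖f t‖ = Real.exp (ρ * t) * |v t| := by
    rw [Real.norm_eq_abs, hfdef, abs_mul, Real.abs_exp]
  rw [hft] at key
  have hexp : (0:ℝ) < Real.exp (ρ * t) := Real.exp_pos _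
  rw [← le_div_iff₀' hexp] at key
  refine key.trans ?_
  rw [div_le_iff₀ hexp]
  have he1 : Real.exp (-(ρ * (t - T))) * Real.exp (ρ * t) = Real.exp (ρ * T) := by
    rw [← Real.exp_add]; ring_nf
  have hCT : 0 ≤ C / ρ * Real.exp (ρ * T) := by positivity
  nlinarith [Real.exp_pos (ρ * T), Real.exp_pos (ρ * t), abs_nonneg (v T),
    mul_le_mul_of_nonneg_left he1.le (abs_nonneg (v T))]

/-- If `|α_c| < π(1/a − 2)` then every characteristic of the mean-field model converges
to the desired direction: `|γ_t(θ) − α_d| → 0` as `t → +∞`, for every `θ ∈ I`. -/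
theorem stmt_7 (αd αc : ℝ) (hαd : αd ∈ Set.Ico (-π) π) (hαc : αc ∈ Set.Ico (-π) π)
    (ρ a : ℝ) (hρ : 0 < ρ) (hρ1 : ρ ≤ 1) (ha : 0 < a) (ha1 : a ≤ 1)
    (hcond : |αc| < π * (1 / a - 2))
    (f₀ : Measure ℝ)
    (hsupp : f₀ (Set.Ico (-π + αd) (π + αd))ᶜ = 0)
    (hmass : f₀ Set.univ = ENNReal.ofReal ρ)
    (γ : ℝ → ℝ → ℝ)
    (hval : ∀ θ ∈ Set.Ico (-π + αd) (π + αd), ∀ t, 0 ≤ t →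
      γ t θ ∈ Set.Ico (-π + αd) (π + αd))
    (hinit : ∀ θ ∈ Set.Ico (-π + αd) (π + αd), γ 0 θ = θ)
    -- the characteristic ODE of the mean-field model:
    (hode : ∀ θ ∈ Set.Ico (-π + αd) (π + αd), ∀ t, 0 ≤ t →
      HasDerivAt (fun s => γ s θ)
        (-ρ * (γ t θ - αd)
          + a * (γ t θ - αd + αc) * ∫ φ, Gfun |γ t θ - γ t φ| ∂f₀) t) :
    ∀ θ ∈ Set.Ico (-π + αd) (π + αd),
      Tendsto (fun t => |γ t θ - αd|) atTop (nhds 0) := by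
  have hπ := Real.pi_pos
  set I : Set ℝ := Set.Ico (-π + αd) (π + αd) with hIdef
  haveI : IsFiniteMeasure f₀ := ⟨by rw [hmass]; exact ENNReal.ofReal_lt_top⟩
  have hmass' : (f₀ Set.univ).toReal = ρ := by rw [hmass, ENNReal.toReal_ofReal hρ.le]
  have haeI : ∀ᵐ ψ ∂f₀, ψ ∈ I := by
    rw [ae_iff]; exact hsupp
  set q := a * (2 * π + |αc|) / π with hqdef
  have hq0 : 0 ≤ q := by positivity
  have hq1 : q < 1 := by
    rw [hqdef, div_lt_one hπ]
    have h1 : a * |αc| < a * (π * (1 / a - 2)) := (mul_lt_mul_iff_right₀ ha).2 hcond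
    have h2 : a * (π * (1 / a - 2)) = π - 2 * π * a := by field_simp
    nlinarith
  have hmemπ : ∀ x ∈ I, |x - αd| ≤ π := fun x hx =>
    abs_le.2 ⟨by have := hx.1; linarith, by have := hx.2; linarith⟩
  have hpair2π : ∀ x ∈ I, ∀ y ∈ I, |x - y| ≤ 2 * π := fun x hx y hy =>
    abs_le.2 ⟨by have := hx.1; have := hy.2; linarith, by have := hx.2; have := hy.1; linarith⟩
  -- bound on the interaction integral
  have hJ : ∀ t, 0 ≤ t → ∀ θ ∈ I, ∀ R, 0 ≤ R → (∀ ψ ∈ I, |γ t θ - γ t ψ| ≤ R) →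
      |∫ ψ, Gfun |γ t θ - γ t ψ| ∂f₀| ≤ R / π * ρ := by
    intro t ht θ hθ R hR hb
    have hae : ∀ᵐ ψ ∂f₀, ‖Gfun |γ t θ - γ t ψ|‖ ≤ R / π := by
      filter_upwards [haeI] with ψ hψ
      have hγθ := hval θ hθ t ht
      have hγψ := hval ψ hψ t ht
      have h0 : (0:ℝ) ≤ |γ t θ - γ t ψ| := abs_nonneg _
      have h2 : |γ t θ - γ t ψ| ≤ 2 * π := hpair2π _ hγθ _ hγψ
      rw [Real.norm_eq_abs, abs_of_nonneg (Gfun_nonneg h0 h2)]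
      exact (Gfun_le h0).trans ((div_le_div_iff_of_pos_right hπ).2 (hb ψ hψ))
    have h := norm_integral_le_of_norm_le_const hae
    rwa [Real.norm_eq_abs, measureReal_def, hmass'] at h
  -- bound on a single forcing term
  have hsingle : ∀ t, 0 ≤ t → ∀ θ ∈ I, ∀ R, 0 ≤ R → (∀ ψ ∈ I, |γ t θ - γ t ψ| ≤ R) →
      |a * (γ t θ - αd + αc) * ∫ ψ, Gfun |γ t θ - γ t ψ| ∂f₀| ≤ q * ρ * R := by
    intro t ht θ hθ R hR hb
    have hJθ := hJ t ht θ hθ R hR hb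
    have hc : |γ t θ - αd + αc| ≤ π + |αc| := by
      refine (abs_add_le _ _).trans ?_
      have := hmemπ _ (hval θ hθ t ht)
      linarith
    rw [abs_mul, abs_mul, abs_of_pos ha]
    calc a * |γ t θ - αd + αc| * |∫ ψ, Gfun |γ t θ - γ t ψ| ∂f₀|
        ≤ a * (π + |αc|) * (R / π * ρ) := by
          have hpos : (0:ℝ) ≤ π + |αc| := by positivity
          gcongr
      _ ≤ q * ρ * R := by
          have hk : a * (π + |αc|) * R * ρ ≤ a * (2 * π + |αc|) * ρ * R := by nlinarith [mul_nonneg (mul_nonneg (mul_nonneg ha.le hπ.le) hρ.le) hR]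
          rw [show a * (π + |αc|) * (R / π * ρ) = a * (π + |αc|) * R * ρ * (1 / π) by ring,
            show q * ρ * R = a * (2 * π + |αc|) * ρ * R * (1 / π) by rw [hqdef]; ring]
          exact mul_le_mul_of_nonneg_right hk (by positivity)
  -- bound on the difference of forcing terms
  have hforce : ∀ t, 0 ≤ t → ∀ θ ∈ I, ∀ φ ∈ I, ∀ R, 0 ≤ R →
      (∀ ψ ∈ I, ∀ χ ∈ I, |γ t ψ - γ t χ| ≤ R) →
      |a * (γ t θ - αd + αc) * (∫ ψ, Gfun |γ t θ - γ t ψ| ∂f₀)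
        - a * (γ t φ - αd + αc) * (∫ ψ, Gfun |γ t φ - γ t ψ| ∂f₀)| ≤ q * ρ * R := by
    intro t ht θ hθ φ hφ R hR hb
    have hbθ : ∀ ψ ∈ I, |γ t θ - γ t ψ| ≤ R := fun ψ hψ => hb θ hθ ψ hψ
    have hbφ : ∀ ψ ∈ I, |γ t φ - γ t ψ| ≤ R := fun ψ hψ => hb φ hφ ψ hψ
    by_cases h1 : Integrable (fun ψ => Gfun |γ t θ - γ t ψ|) f₀
    · by_cases h2 : Integrable (fun ψ => Gfun |γ t φ - γ t ψ|) f₀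
      · have heq : a * (γ t θ - αd + αc) * (∫ ψ, Gfun |γ t θ - γ t ψ| ∂f₀)
            - a * (γ t φ - αd + αc) * (∫ ψ, Gfun |γ t φ - γ t ψ| ∂f₀)
            = ∫ ψ, (a * (γ t θ - αd + αc) * Gfun |γ t θ - γ t ψ|
              - a * (γ t φ - αd + αc) * Gfun |γ t φ - γ t ψ|) ∂f₀ := by
          rw [integral_sub (h1.const_mul _) (h2.const_mul _),
            integral_const_mul, integral_const_mul]
        rw [heq]
        have hae : ∀ᵐ ψ ∂f₀, ‖a * (γ t θ - αd + αc) * Gfun |γ t θ - γ t ψ|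
            - a * (γ t φ - αd + αc) * Gfun |γ t φ - γ t ψ|‖
            ≤ a * ((2 * π + |αc|) / π) * R := by
          filter_upwards [haeI] with ψ hψ
          have hγθ := hval θ hθ t ht
          have hγφ := hval φ hφ t ht
          have hγψ := hval ψ hψ t ht
          have hg1a : 0 ≤ Gfun |γ t θ - γ t ψ| :=
            Gfun_nonneg (abs_nonneg _) (hpair2π _ hγθ _ hγψ)
          have hg1b : Gfun |γ t θ - γ t ψ| ≤ 1 :=
            Gfun_le_one (abs_nonneg _) (hpair2π _ hγθ _ hγψ)
          have hdθφ : |γ t θ - γ t φ| ≤ R := hb θ hθ φ hφ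
          have hlip : abs (Gfun |γ t θ - γ t ψ| - Gfun |γ t φ - γ t ψ|) ≤ R / π := by
            refine (Gfun_lip _ _).trans ?_
            refine (div_le_div_iff_of_pos_right hπ).2 ?_
            refine (abs_abs_sub_abs_le_abs_sub _ _).trans ?_
            rw [show γ t θ - γ t ψ - (γ t φ - γ t ψ) = γ t θ - γ t φ by ring]
            exact hdθφ
          have hc2 : |γ t φ - αd + αc| ≤ π + |αc| := by
            refine (abs_add_le _ _).trans ?_
            have := hmemπ _ hγφ
            linarith
          rw [Real.norm_eq_abs,
            show a * (γ t θ - αd + αc) * Gfun |γ t θ - γ t ψ|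
              - a * (γ t φ - αd + αc) * Gfun |γ t φ - γ t ψ|
              = a * ((γ t θ - γ t φ) * Gfun |γ t θ - γ t ψ|
                + (γ t φ - αd + αc) * (Gfun |γ t θ - γ t ψ| - Gfun |γ t φ - γ t ψ|)) by ring,
            abs_mul, abs_of_pos ha,
            show a * ((2 * π + |αc|) / π) * R = a * (R * 1 + (π + |αc|) * (R / π)) by
              field_simp; ring]
          refine mul_le_mul_of_nonneg_left ?_ ha.le
          refine (abs_add_le _ _).trans ?_
          rw [abs_mul, abs_mul]
          have habs1 : abs (Gfun |γ t θ - γ t ψ|) ≤ 1 := abs_le.2 ⟨by linarith, hg1b⟩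
          gcongr
        have h := norm_integral_le_of_norm_le_const hae
        rw [Real.norm_eq_abs, measureReal_def, hmass'] at h
        refine h.trans ?_
        rw [show a * ((2 * π + |αc|) / π) * R * ρ = q * ρ * R by rw [hqdef]; ring]
      · rw [integral_undef h2, mul_zero, sub_zero]
        exact hsingle t ht θ hθ R hR hbθ
    · by_cases h2 : Integrable (fun ψ => Gfun |γ t φ - γ t ψ|) f₀
      · rw [integral_undef h1, mul_zero, zero_sub, abs_neg]
        exact hsingle t ht φ hφ R hR hbφ
      · rw [integral_undef h1, integral_undef h2, mul_zero, mul_zero, sub_zero, abs_zero]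
        positivity
  -- derivative of the difference of two characteristics
  have hderiv_pair : ∀ θ ∈ I, ∀ φ ∈ I, ∀ s, 0 ≤ s →
      HasDerivAt (fun u => γ u θ - γ u φ)
        (-ρ * (γ s θ - γ s φ) +
          (a * (γ s θ - αd + αc) * (∫ ψ, Gfun |γ s θ - γ s ψ| ∂f₀)
           - a * (γ s φ - αd + αc) * (∫ ψ, Gfun |γ s φ - γ s ψ| ∂f₀))) s := by
    intro θ hθ φ hφ s hs
    have h := (hode θ hθ s hs).sub (hode φ hφ s hs)
    have heq : (-ρ * (γ s θ - αd) + a * (γ s θ - αd + αc) * ∫ ψ, Gfun |γ s θ - γ s ψ| ∂f₀)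
        - (-ρ * (γ s φ - αd) + a * (γ s φ - αd + αc) * ∫ ψ, Gfun |γ s φ - γ s ψ| ∂f₀)
        = -ρ * (γ s θ - γ s φ) +
          (a * (γ s θ - αd + αc) * (∫ ψ, Gfun |γ s θ - γ s ψ| ∂f₀)
           - a * (γ s φ - αd + αc) * (∫ ψ, Gfun |γ s φ - γ s ψ| ∂f₀)) := by ring
    rwa [heq] at h
  -- the contraction constant
  set q' := (1 + q) / 2 with hq'def
  have hq'0 : 0 < q' := by rw [hq'def]; linarith
  have hq'1 : q' < 1 := by rw [hq'def]; linarith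
  have hqq' : q < q' := by rw [hq'def]; linarith
  -- iterated contraction of pairwise distances
  have key : ∀ n : ℕ, ∃ T, 0 ≤ T ∧ ∀ t, T ≤ t → ∀ θ ∈ I, ∀ φ ∈ I,
      |γ t θ - γ t φ| ≤ 2 * π * q' ^ n := by
    intro n
    induction n with
    | zero =>
      exact ⟨0, le_refl 0, fun t ht θ hθ φ hφ => by
        simpa using hpair2π _ (hval θ hθ t ht) _ (hval φ hφ t ht)⟩
    | succ n ih =>
      obtain ⟨T, hT0, hTb⟩ := ih
      set R := 2 * π * q' ^ n with hRdef
      have hRpos : 0 < R := by positivity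
      have hdec : Tendsto (fun t : ℝ => 2 * π * Real.exp (-(ρ * (t - T)))) atTop (nhds 0) := by
        have h1 : Tendsto (fun t : ℝ => t - T) atTop atTop := tendsto_atTop_add_const_right _ (-T) tendsto_id
        have h2 : Tendsto (fun t : ℝ => ρ * (t - T)) atTop atTop := h1.const_mul_atTop hρ
        have h3 : Tendsto (fun t : ℝ => -(ρ * (t - T))) atTop atBot := tendsto_neg_atTop_atBot.comp h2
        have h4 : Tendsto (fun t : ℝ => Real.exp (-(ρ * (t - T)))) atTop (nhds 0) :=
          Real.tendsto_exp_atBot.comp h3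
        simpa using h4.const_mul (2 * π)
      obtain ⟨T1, hT1⟩ := eventually_atTop.1 (hdec.eventually (gt_mem_nhds
        (mul_pos (by linarith : (0:ℝ) < q' - q) hRpos)))
      refine ⟨max T T1, hT0.trans (le_max_left _ _), fun t htT θ hθ φ hφ => ?_⟩
      have htT' : T ≤ t := (le_max_left _ _).trans htT
      have hvb := decay_bound hρ (by positivity : (0:ℝ) ≤ q * ρ * R) htT'
        (v := fun u => γ u θ - γ u φ)
        (F := fun s => a * (γ s θ - αd + αc) * (∫ ψ, Gfun |γ s θ - γ s ψ| ∂f₀)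
          - a * (γ s φ - αd + αc) * (∫ ψ, Gfun |γ s φ - γ s ψ| ∂f₀))
        (fun s hs => hderiv_pair θ hθ φ hφ s (hT0.trans hs.1))
        (fun s hs => hforce s (hT0.trans hs.1) θ hθ φ hφ R hRpos.le
          (fun ψ hψ χ hχ => hTb s hs.1 ψ hψ χ hχ))
      have h1 : |γ T θ - γ T φ| * Real.exp (-(ρ * (t - T)))
          ≤ 2 * π * Real.exp (-(ρ * (t - T))) :=
        mul_le_mul_of_nonneg_right (hpair2π _ (hval θ hθ T hT0) _ (hval φ hφ T hT0))
          (Real.exp_pos _).le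
      have h2 : 2 * π * Real.exp (-(ρ * (t - T))) < (q' - q) * R :=
        hT1 t ((le_max_right _ _).trans htT)
      have h3 : q * ρ * R / ρ = q * R := by field_simp
      have hfin : |γ t θ - γ t φ| ≤ q' * R := by
        rw [h3] at hvb
        linarith
      rw [hRdef] at hfin
      calc |γ t θ - γ t φ| ≤ q' * (2 * π * q' ^ n) := hfin
        _ = 2 * π * q' ^ (n + 1) := by ring
  -- conclusion
  intro θ₀ hθ₀
  rw [Metric.tendsto_atTop]
  intro ε hε
  have hpow : Tendsto (fun n : ℕ => 2 * π * q' ^ n) atTop (nhds 0) := by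
    have := tendsto_pow_atTop_nhds_zero_of_lt_one hq'0.le hq'1
    simpa using this.const_mul (2 * π)
  obtain ⟨n, hn⟩ := (hpow.eventually (gt_mem_nhds (half_pos hε))).exists
  obtain ⟨T, hT0, hTb⟩ := key n
  set R := 2 * π * q' ^ n with hRdef
  have hRpos : 0 < R := by positivity
  have hdec : Tendsto (fun t : ℝ => 2 * π * Real.exp (-(ρ * (t - T)))) atTop (nhds 0) := by
    have h1 : Tendsto (fun t : ℝ => t - T) atTop atTop := tendsto_atTop_add_const_right _ (-T) tendsto_id
    have h2 : Tendsto (fun t : ℝ => ρ * (t - T)) atTop atTop := h1.const_mul_atTop hρ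
    have h3 : Tendsto (fun t : ℝ => -(ρ * (t - T))) atTop atBot := tendsto_neg_atTop_atBot.comp h2
    have h4 : Tendsto (fun t : ℝ => Real.exp (-(ρ * (t - T)))) atTop (nhds 0) :=
      Real.tendsto_exp_atBot.comp h3
    simpa using h4.const_mul (2 * π)
  obtain ⟨T1, hT1⟩ := eventually_atTop.1 (hdec.eventually (gt_mem_nhds
    (show (0:ℝ) < ε / 2 - q * R by nlinarith)))
  refine ⟨max T T1, fun t ht => ?_⟩
  have htT : T ≤ t := (le_max_left _ _).trans ht
  have hvb := decay_bound hρ (by positivity : (0:ℝ) ≤ q * ρ * R) htT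
    (v := fun u => γ u θ₀ - αd)
    (F := fun s => a * (γ s θ₀ - αd + αc) * (∫ ψ, Gfun |γ s θ₀ - γ s ψ| ∂f₀))
    (fun s hs => by
      have h := (hode θ₀ hθ₀ s (hT0.trans hs.1)).sub_const αd
      -- the derivative is unchanged by subtracting a constant
      exact h)
    (fun s hs => hsingle s (hT0.trans hs.1) θ₀ hθ₀ R hRpos.le
      (fun ψ hψ => hTb s hs.1 θ₀ hθ₀ ψ hψ))
  have h1 : |γ T θ₀ - αd| * Real.exp (-(ρ * (t - T)))
      ≤ 2 * π * Real.exp (-(ρ * (t - T))) := by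
    refine mul_le_mul_of_nonneg_right ?_ (Real.exp_pos _).le
    have := hmemπ _ (hval θ₀ hθ₀ T hT0)
    linarith
  have h2 : 2 * π * Real.exp (-(ρ * (t - T))) < ε / 2 - q * R :=
    hT1 t ((le_max_right _ _).trans ht)
  have h3 : q * ρ * R / ρ = q * R := by field_simp
  rw [Real.dist_eq, sub_zero, abs_abs]
  rw [h3] at hvb
  linarith
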